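/- Let p be T-periodic with ∫₀ᵀ p = 0 and ess-sup |p| < M, and let n ∈ ℕ with n ≥ M. Define f(t) = t·P₂(T) + T·P₂(φ₀) − T·P₂(t + φ₀) and dₙ(t) = (n·T²/4)·t. Then f(t) < dₙ(t) for all t > 0. -/

import Mathlib

open MeasureTheory intervalIntegral

/-- For `|p| < M` a.e. and `a < b`, the integral of `p` over `[a,b]` is strictly
less than `M * (b - a)`. -/
lemma strict_int_bound (M : ℝ) (p : ℝ → ℝ) (hloc : LocallyIntegrable p volume)
    (hM : ∀ᵐ t ∂volume, |p t| < M) {a b : ℝ} (hab : a < b) :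
    (∫ s in a..b, p s) < M * (b - a) := by
  have hpi : IntervalIntegrable p volume a b :=
    intervalIntegrable_iff.2
      ((hloc.integrableOn_isCompact isCompact_uIcc).mono_set Set.uIoc_subset_uIcc)
  have hpio : IntegrableOn p (Set.Ioc a b) volume := by
    have := hpi.def'
    rwa [Set.uIoc_of_le hab.le] at this
  have hfint : IntegrableOn (fun x => M - p x) (Set.Ioc a b) volume := by
    apply Integrable.sub _ hpio
    exact integrableOn_const (by simp)
  have h1 : 0 < ∫ x in Set.Ioc a b, (M - p x) ∂volume := by
    rw [MeasureTheory.setIntegral_pos_iff_support_of_nonneg_ae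
      (by filter_upwards [ae_restrict_of_ae hM] with x hx
          have := abs_lt.1 hx
          simp only [Pi.zero_apply]; linarith) hfint]
    have hsub : Set.Ioc a b ≤ᶠ[ae volume]
        (((Function.support fun x => M - p x) ∩ Set.Ioc a b : Set ℝ)) := by
      filter_upwards [hM] with x hx hxi
      refine ⟨?_, hxi⟩
      have := abs_lt.1 hx
      simp only [Function.mem_support]
      intro h; linarith [sub_eq_zero.1 h]
    refine lt_of_lt_of_le ?_ (measure_mono_ae hsub)
    rw [Real.volume_Ioc]
    simp [hab, sub_pos.2 hab]
  have h2 : (∫ x in a..b, (M - p x)) = M * (b - a) - ∫ s in a..b, p s := by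
    rw [intervalIntegral.integral_sub (intervalIntegrable_const) hpi,
      intervalIntegral.integral_const, smul_eq_mul, mul_comm]
  have h3 : (∫ x in a..b, (M - p x)) = ∫ x in Set.Ioc a b, (M - p x) ∂volume :=
    intervalIntegral.integral_of_le hab.le
  rw [← h3, h2] at h1
  linarith

theorem f_lt_dn
    (T : ℝ) (hT : 0 < T) (M : ℝ) (φ₀ : ℝ) (p : ℝ → ℝ)
    (hper : ∀ t, p (t + T) = p t)
    (hloc : LocallyIntegrable p volume)
    (havg : (∫ s in (0:ℝ)..T, p s) = 0)
    (hM : ∀ᵐ t ∂volume, |p t| < M)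
    (P₁ P₂ f : ℝ → ℝ)
    (hP₁ : ∀ t, P₁ t = ∫ s in (0:ℝ)..t, p s)
    (hP₂ : ∀ t, P₂ t = ∫ s in (0:ℝ)..t, P₁ s)
    (hf : ∀ t, f t = t * P₂ T + T * P₂ φ₀ - T * P₂ (t + φ₀))
    (n : ℕ) (hn : M ≤ n) :
    ∀ t, 0 < t → f t < (n * T ^ 2 / 4) * t := by
  have hpi : ∀ a b : ℝ, IntervalIntegrable p volume a b := fun a b =>
    intervalIntegrable_iff.2
      ((hloc.integrableOn_isCompact isCompact_uIcc).mono_set Set.uIoc_subset_uIcc)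
  -- convenient strict bounds
  have keyU : ∀ a b : ℝ, a < b → (∫ s in a..b, p s) < M * (b - a) :=
    fun a b hab => strict_int_bound M p hloc hM hab
  have keyL : ∀ a b : ℝ, a < b → -(M * (b - a)) < ∫ s in a..b, p s := by
    intro a b hab
    have := strict_int_bound M (fun x => -p x) hloc.neg
      (by filter_upwards [hM] with x hx; rwa [abs_neg]) hab
    rw [intervalIntegral.integral_neg] at this
    linarith
  -- `P₁` facts
  have hP₁sub : ∀ a b : ℝ, P₁ b - P₁ a = ∫ s in a..b, p s := by
    intro a b
    rw [hP₁ a, hP₁ b, ← intervalIntegral.integral_add_adjacent_intervals (hpi 0 a) (hpi a b)]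
    ring
  have hP₁cont : Continuous P₁ := by
    have h := intervalIntegral.continuous_primitive hpi 0
    have : P₁ = fun t => ∫ s in (0:ℝ)..t, p s := funext hP₁
    rw [this]; exact h
  have hpper : Function.Periodic p T := hper
  have hP₁per : Function.Periodic P₁ T := by
    intro x
    have h1 : P₁ (x + T) - P₁ x = ∫ s in x..x + T, p s := hP₁sub x (x + T)
    have h2 : (∫ s in x..x + T, p s) = ∫ s in (0:ℝ)..(0:ℝ) + T, p s :=
      hpper.intervalIntegral_add_eq x 0
    rw [zero_add] at h2
    have := h1.trans (h2.trans havg)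
    linarith
  have hP₁ii : ∀ a b : ℝ, IntervalIntegrable P₁ volume a b := fun a b =>
    hP₁cont.intervalIntegrable a b
  -- Claim C : `P₂ T - T * P₁ x < M * T ^ 2 / 4` for all `x`
  have claimC : ∀ x : ℝ, P₂ T - T * P₁ x < M * T ^ 2 / 4 := by
    intro x
    have hper' : P₂ T = ∫ s in x..x + T, P₁ s := by
      have h := hP₁per.intervalIntegral_add_eq 0 x
      rw [zero_add] at h
      rw [hP₂ T, h]
    set m := x + T / 2 with hm
    have hxm : x < m := by simp [hm]; linarith
    have hmT : m < x + T := by simp [hm]; linarith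
    -- first piece
    have h1 : (∫ s in x..m, (P₁ s - P₁ x)) < M * T ^ 2 / 8 := by
      have hpos : 0 < ∫ s in x..m, (M * (s - x) - (P₁ s - P₁ x)) := by
        apply intervalIntegral.intervalIntegral_pos_of_pos_on
        · exact ((continuous_const.mul (continuous_id.sub continuous_const)).sub
            (hP₁cont.sub continuous_const)).intervalIntegrable x m
        · intro s hs
          have h := keyU x s hs.1
          rw [← hP₁sub x s] at h
          linarith
        · exact hxm
      have hsplit : (∫ s in x..m, (M * (s - x) - (P₁ s - P₁ x)))
          = (∫ s in x..m, M * (s - x)) - ∫ s in x..m, (P₁ s - P₁ x) := by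
        apply intervalIntegral.integral_sub
        · exact (continuous_const.mul (continuous_id.sub continuous_const)).intervalIntegrable x m
        · exact (hP₁cont.sub continuous_const).intervalIntegrable x m
      have hval : (∫ s in x..m, M * (s - x)) = M * T ^ 2 / 8 := by
        rw [intervalIntegral.integral_const_mul]
        have : (∫ s in x..m, (s - x)) = ∫ s in (x - x)..(m - x), s :=
          intervalIntegral.integral_comp_sub_right (fun s => s) x
        rw [this, integral_id]
        rw [hm]; ring
      rw [hsplit, hval] at hpos
      linarith
    -- second piece
    have h2 : (∫ s in m..x + T, (P₁ s - P₁ x)) < M * T ^ 2 / 8 := by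
      have hpos : 0 < ∫ s in m..x + T, (M * (x + T - s) - (P₁ s - P₁ x)) := by
        apply intervalIntegral.intervalIntegral_pos_of_pos_on
        · exact ((continuous_const.mul (continuous_const.sub continuous_id)).sub
            (hP₁cont.sub continuous_const)).intervalIntegrable m (x + T)
        · intro s hs
          have h := keyL s (x + T) hs.2
          rw [← hP₁sub s (x + T)] at h
          have hpx : P₁ (x + T) = P₁ x := hP₁per x
          rw [hpx] at h
          linarith
        · exact hmT
      have hsplit : (∫ s in m..x + T, (M * (x + T - s) - (P₁ s - P₁ x)))
          = (∫ s in m..x + T, M * (x + T - s)) - ∫ s in m..x + T, (P₁ s - P₁ x) := by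
        apply intervalIntegral.integral_sub
        · exact (continuous_const.mul (continuous_const.sub continuous_id)).intervalIntegrable m (x + T)
        · exact (hP₁cont.sub continuous_const).intervalIntegrable m (x + T)
      have hval : (∫ s in m..x + T, M * (x + T - s)) = M * T ^ 2 / 8 := by
        rw [intervalIntegral.integral_const_mul]
        have h1' : (∫ s in m..x + T, (x + T - s)) = ∫ s in m..x + T, ((x + T) - s) := rfl
        have h2' : (∫ s in m..x + T, ((x + T) - s))
            = (∫ s in m..x + T, (x + T : ℝ)) - ∫ s in m..x + T, s := by
          apply intervalIntegral.integral_sub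
          · exact intervalIntegrable_const
          · exact continuous_id.intervalIntegrable m (x + T)
        rw [h1', h2', intervalIntegral.integral_const, integral_id,
          smul_eq_mul, hm]
        ring
      rw [hsplit, hval] at hpos
      linarith
    -- combine
    have hadd : (∫ s in x..m, (P₁ s - P₁ x)) + (∫ s in m..x + T, (P₁ s - P₁ x))
        = ∫ s in x..x + T, (P₁ s - P₁ x) :=
      intervalIntegral.integral_add_adjacent_intervals
        ((hP₁cont.sub continuous_const).intervalIntegrable _ _)
        ((hP₁cont.sub continuous_const).intervalIntegrable _ _)
    have hsplit2 : (∫ s in x..x + T, (P₁ s - P₁ x))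
        = (∫ s in x..x + T, P₁ s) - ∫ s in x..x + T, (P₁ x : ℝ) := by
      apply intervalIntegral.integral_sub (hP₁ii _ _) intervalIntegrable_const
    have hconst : (∫ s in x..x + T, (P₁ x : ℝ)) = T * P₁ x := by
      rw [intervalIntegral.integral_const, smul_eq_mul]; ring
    have : P₂ T - T * P₁ x = ∫ s in x..x + T, (P₁ s - P₁ x) := by
      rw [hsplit2, hconst, hper']
    rw [this, ← hadd]
    linarith
  -- final step
  intro t ht
  have hfrep : f t = ∫ u in (0:ℝ)..t, (P₂ T - T * P₁ (u + φ₀)) := by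
    have hP₂sub : P₂ (t + φ₀) - P₂ φ₀ = ∫ s in φ₀..t + φ₀, P₁ s := by
      rw [hP₂ φ₀, hP₂ (t + φ₀),
        ← intervalIntegral.integral_add_adjacent_intervals (hP₁ii 0 φ₀) (hP₁ii φ₀ (t + φ₀))]
      ring
    have hshift : (∫ u in (0:ℝ)..t, P₁ (u + φ₀)) = ∫ s in φ₀..t + φ₀, P₁ s := by
      have := intervalIntegral.integral_comp_add_right (a := (0:ℝ)) (b := t) P₁ φ₀
      rwa [zero_add] at this
    have hsplit : (∫ u in (0:ℝ)..t, (P₂ T - T * P₁ (u + φ₀)))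
        = (∫ u in (0:ℝ)..t, (P₂ T : ℝ)) - ∫ u in (0:ℝ)..t, T * P₁ (u + φ₀) := by
      apply intervalIntegral.integral_sub intervalIntegrable_const
      exact (continuous_const.mul (hP₁cont.comp (continuous_id.add continuous_const))).intervalIntegrable 0 t
    rw [hf t, hsplit, intervalIntegral.integral_const, intervalIntegral.integral_const_mul,
      hshift, ← hP₂sub, smul_eq_mul]
    ring
  have hMn : M * T ^ 2 / 4 ≤ (n : ℝ) * T ^ 2 / 4 := by
    have : (0:ℝ) ≤ T ^ 2 := sq_nonneg T
    nlinarith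
  have hpos : 0 < ∫ u in (0:ℝ)..t, ((n : ℝ) * T ^ 2 / 4 - (P₂ T - T * P₁ (u + φ₀))) := by
    apply intervalIntegral.intervalIntegral_pos_of_pos_on
    · exact (continuous_const.sub (continuous_const.sub
        (continuous_const.mul (hP₁cont.comp (continuous_id.add continuous_const))))).intervalIntegrable 0 t
    · intro u _
      have := claimC (u + φ₀)
      linarith
    · exact ht
  have hsplit : (∫ u in (0:ℝ)..t, ((n : ℝ) * T ^ 2 / 4 - (P₂ T - T * P₁ (u + φ₀))))
      = (∫ u in (0:ℝ)..t, ((n : ℝ) * T ^ 2 / 4)) - ∫ u in (0:ℝ)..t, (P₂ T - T * P₁ (u + φ₀)) := by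
    apply intervalIntegral.integral_sub intervalIntegrable_const
    exact (continuous_const.sub
      (continuous_const.mul (hP₁cont.comp (continuous_id.add continuous_const)))).intervalIntegrable 0 t
  rw [hsplit, intervalIntegral.integral_const, smul_eq_mul, ← hfrep] at hpos
  linarith
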